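/- A subset B of a metric space (X,d) is Bourbaki-bounded in X if and only if every real-valued uniformly continuous function on X is bounded on B. -/

import Mathlib

/-- m-fold ε-enlargement: `iterBall x ε 0 = ball x ε`, corresponding to B^{m+1}. -/
def iterBall {X : Type*} [PseudoMetricSpace X] (x : X) (ε : ℝ) : ℕ → Set X
  | 0 => Metric.ball x ε
  | (m+1) => ⋃ y ∈ iterBall x ε m, Metric.ball y ε

/-- ε-chainable component of x. -/
def chainBall {X : Type*} [PseudoMetricSpace X] (x : X) (ε : ℝ) : Set X :=
  ⋃ m, iterBall x ε m

/-- Bourbaki-bounded subset of a metric space. -/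
def BourbakiBounded {X : Type*} [PseudoMetricSpace X] (B : Set X) : Prop :=
  ∀ ε > 0, ∃ (m : ℕ) (s : Finset X), B ⊆ ⋃ x ∈ s, iterBall x ε m

/-- α-bounded subset of a metric space. -/
def AlphaBounded {X : Type*} [PseudoMetricSpace X] (B : Set X) : Prop :=
  ∀ ε > 0, ∃ s : Finset X, B ⊆ ⋃ x ∈ s, chainBall x ε

/-- x and y are ε-chained. -/
def Chained {X : Type*} [PseudoMetricSpace X] (ε : ℝ) (x y : X) : Prop :=
  ∃ (n : ℕ) (u : ℕ → X), u 0 = x ∧ u n = y ∧ ∀ k < n, dist (u k) (u (k+1)) < ε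

/-- Bourbaki-Cauchy sequence. -/
def BourbakiCauchy {X : Type*} [PseudoMetricSpace X] (u : ℕ → X) : Prop :=
  ∀ ε > 0, ∃ (m N : ℕ) (x₀ : X), ∀ n ≥ N, u n ∈ iterBall x₀ ε m

/-- Bourbaki-complete metric space. -/
def BourbakiComplete (X : Type*) [PseudoMetricSpace X] : Prop :=
  ∀ u : ℕ → X, BourbakiCauchy u → ∃ x : X, MapClusterPt x Filter.atTop u

section Aux

open Metric Finset

variable {X : Type*} [PseudoMetricSpace X] {ε : ℝ}

lemma iterBall_succ_of_mem {x z y : X} {m : ℕ} (hz : z ∈ iterBall x ε m)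
    (hy : dist y z < ε) : y ∈ iterBall x ε (m+1) := by
  show y ∈ ⋃ w ∈ iterBall x ε m, Metric.ball w ε
  exact Set.mem_biUnion hz (by simpa [Metric.mem_ball] using hy)

lemma self_mem_iterBall (hε : 0 < ε) (x : X) (m : ℕ) : x ∈ iterBall x ε m := by
  induction m with
  | zero => simpa [iterBall] using hε
  | succ m ih => exact iterBall_succ_of_mem ih (by simpa using hε)

lemma iterBall_mono (hε : 0 < ε) {x : X} {m m' : ℕ} (h : m ≤ m') :
    iterBall x ε m ⊆ iterBall x ε m' := by
  induction m' with
  | zero => simp_all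
  | succ m' ih =>
    rcases Nat.lt_or_ge m (m'+1) with h' | h'
    · intro y hy
      exact iterBall_succ_of_mem (ih (Nat.lt_succ_iff.mp h') hy) (by simpa using hε)
    · have : m = m' + 1 := le_antisymm h h'
      subst this; exact subset_rfl

lemma iterBall_trans {x z y : X} {a b : ℕ} (hz : z ∈ iterBall x ε a)
    (hy : y ∈ iterBall z ε b) : y ∈ iterBall x ε (a + b + 1) := by
  induction b generalizing y with
  | zero => exact iterBall_succ_of_mem hz (by simpa [iterBall, Metric.mem_ball] using hy)
  | succ b ih =>
    obtain ⟨w, hw, hyw⟩ := Set.mem_iUnion₂.mp hy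
    exact iterBall_succ_of_mem (ih hw) (Metric.mem_ball.mp hyw)

/-- Key coarsening lemma: a chain with steps `< ε` and total length `< m * ε / 2`
lands in `iterBall (u 0) ε m`. -/
lemma chain_sum_mem_iterBall (hε : 0 < ε) :
    ∀ n : ℕ, ∀ u : ℕ → X, ∀ m : ℕ, (∀ k < n, dist (u k) (u (k+1)) < ε) →
    (∑ k ∈ Finset.range n, dist (u k) (u (k+1))) < m * ε / 2 →
    u n ∈ iterBall (u 0) ε m := by
  intro n
  induction n using Nat.strong_induction_on with
  | _ n IH =>
    intro u m hsteps hsum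
    set S := ∑ k ∈ Finset.range n, dist (u k) (u (k+1)) with hSdef
    have hS0 : 0 ≤ S := Finset.sum_nonneg fun _ _ => dist_nonneg
    by_cases hS : S < ε
    · -- one ball suffices
      have hd : dist (u n) (u 0) ≤ S := by
        rw [dist_comm]; exact dist_le_range_sum_dist u n
      have : u n ∈ iterBall (u 0) ε 0 := by
        simpa [iterBall, Metric.mem_ball] using lt_of_le_of_lt hd hS
      exact iterBall_mono hε (Nat.zero_le m) this
    · push_neg at hS
      -- find the first prefix with sum ≥ ε
      have hex : ∃ j, ε ≤ ∑ k ∈ Finset.range j, dist (u k) (u (k+1)) := ⟨n, hS⟩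
      classical
      set j := Nat.find hex with hjdef
      have hjspec : ε ≤ ∑ k ∈ Finset.range j, dist (u k) (u (k+1)) := Nat.find_spec hex
      have hjn : j ≤ n := Nat.find_le hS
      have hj0 : j ≠ 0 := by
        intro h
        rw [h] at hjspec; simp at hjspec; linarith
      have hjpred : ¬ ε ≤ ∑ k ∈ Finset.range (j-1), dist (u k) (u (k+1)) :=
        Nat.find_min hex (by omega)
      push_neg at hjpred
      -- u (j-1) ∈ ball (u 0) ε, hence u j ∈ iterBall (u 0) ε 1
      have hujpred : dist (u (j-1)) (u 0) ≤ ∑ k ∈ Finset.range (j-1), dist (u k) (u (k+1)) := by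
        rw [dist_comm]; exact dist_le_range_sum_dist u (j-1)
      have hujpred' : u (j-1) ∈ iterBall (u 0) ε 0 := by
        simpa [iterBall, Metric.mem_ball] using lt_of_le_of_lt hujpred hjpred
      have hstepj : dist (u j) (u (j-1)) < ε := by
        have h1 : j - 1 < n := by omega
        have := hsteps (j-1) h1
        rw [dist_comm] at this
        have hj1 : j - 1 + 1 = j := by omega
        rwa [hj1] at this
      have huj : u j ∈ iterBall (u 0) ε 1 := iterBall_succ_of_mem hujpred' hstepj
      -- m ≥ 3
      have hεS : ε ≤ S := hS
      have hm3 : 3 ≤ m := by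
        by_contra hm
        push_neg at hm
        interval_cases m <;> [skip; skip; skip] <;> nlinarith
      -- remaining chain
      set v : ℕ → X := fun k => u (j + k) with hvdef
      have hvsteps : ∀ k < n - j, dist (v k) (v (k+1)) < ε := by
        intro k hk
        have : j + k + 1 = j + (k+1) := by ring
        simpa [hvdef, this] using hsteps (j + k) (by omega)
      have hsplit : (∑ k ∈ Finset.range j, dist (u k) (u (k+1)))
          + (∑ k ∈ Finset.range (n-j), dist (v k) (v (k+1))) = S := by
        have h1 : ∑ k ∈ Finset.range (n-j), dist (v k) (v (k+1))
            = ∑ k ∈ Finset.Ico j n, dist (u k) (u (k+1)) := by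
          rw [Finset.sum_Ico_eq_sum_range]
          apply Finset.sum_congr rfl
          intro k _
          simp [hvdef, Nat.add_assoc]
        rw [h1, hSdef, Finset.range_eq_Ico, Finset.range_eq_Ico]
        exact Finset.sum_Ico_consecutive (fun k => dist (u k) (u (k+1))) (Nat.zero_le j) hjn
      have hvsum : (∑ k ∈ Finset.range (n-j), dist (v k) (v (k+1))) < ((m - 2 : ℕ) : ℝ) * ε / 2 := by
        rw [Nat.cast_sub (by omega : 2 ≤ m)]
        push_cast
        nlinarith [hsplit, hjspec]
      have hrec : v (n - j) ∈ iterBall (v 0) ε (m - 2) :=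
        IH (n - j) (by omega) v (m-2) hvsteps hvsum
      have hv0 : v 0 = u j := by simp [hvdef]
      have hvn : v (n - j) = u n := by simp [hvdef, Nat.add_sub_cancel' hjn]
      rw [hv0, hvn] at hrec
      have := iterBall_trans huj hrec
      have hmeq : 1 + (m - 2) + 1 = m := by omega
      rwa [hmeq] at this

/-- The set of total lengths of ε-chains from x to y. -/
def chainSums (ε : ℝ) (x y : X) : Set ℝ :=
  {S | ∃ (n : ℕ) (u : ℕ → X), u 0 = x ∧ u n = y ∧ (∀ k < n, dist (u k) (u (k+1)) < ε) ∧
    S = ∑ k ∈ Finset.range n, dist (u k) (u (k+1))}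

lemma chainSums_nonneg {x y : X} {S : ℝ} (h : S ∈ chainSums ε x y) : 0 ≤ S := by
  obtain ⟨n, u, -, -, -, rfl⟩ := h
  exact Finset.sum_nonneg fun _ _ => dist_nonneg

lemma chainSums_bddBelow (x y : X) : BddBelow (chainSums ε x y) :=
  ⟨0, fun S hS => chainSums_nonneg hS⟩

lemma chainSums_extend {x y z : X} {S : ℝ} (h : S ∈ chainSums ε x y) (hd : dist y z < ε) :
    S + dist y z ∈ chainSums ε x z := by
  obtain ⟨n, u, hu0, hun, hsteps, rfl⟩ := h
  refine ⟨n+1, fun k => if k ≤ n then u k else z, by simp [hu0], by simp, ?_, ?_⟩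
  · intro k hk
    rcases Nat.lt_or_ge k n with h' | h'
    · simp only [if_pos (Nat.le_of_lt h'), if_pos (Nat.succ_le_of_lt h')]
      exact hsteps k h'
    · have hkn : k = n := by omega
      subst hkn
      simp only [if_pos (le_refl k), if_neg (by omega : ¬ k + 1 ≤ k)]
      rwa [hun]
  · rw [Finset.sum_range_succ]
    have h1 : ∑ k ∈ Finset.range n,
        dist (if k ≤ n then u k else z) (if k + 1 ≤ n then u (k+1) else z)
        = ∑ k ∈ Finset.range n, dist (u k) (u (k+1)) := by
      apply Finset.sum_congr rfl
      intro k hk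
      have hk' := Finset.mem_range.mp hk
      simp [Nat.le_of_lt hk', Nat.succ_le_of_lt hk']
    simp only [h1]
    simp [hun]

lemma chained_of_chainSums {x y : X} {S : ℝ} (h : S ∈ chainSums ε x y) : Chained ε x y := by
  obtain ⟨n, u, hu0, hun, hsteps, -⟩ := h
  exact ⟨n, u, hu0, hun, hsteps⟩

lemma chainSums_of_chained {x y : X} (h : Chained ε x y) : (chainSums ε x y).Nonempty := by
  obtain ⟨n, u, hu0, hun, hsteps⟩ := h
  exact ⟨_, n, u, hu0, hun, hsteps, rfl⟩

lemma chained_refl (x : X) : Chained ε x x := ⟨0, fun _ => x, rfl, rfl, by omega⟩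

lemma chained_extend {x y z : X} (h : Chained ε x y) (hd : dist y z < ε) : Chained ε x z := by
  obtain ⟨n, u, hu0, hun, hsteps⟩ := h
  refine ⟨n+1, fun k => if k ≤ n then u k else z, by simp [hu0], by simp, ?_⟩
  intro k hk
  rcases Nat.lt_or_ge k n with h' | h'
  · simp only [if_pos (Nat.le_of_lt h'), if_pos (Nat.succ_le_of_lt h')]
    exact hsteps k h'
  · have hkn : k = n := by omega
    subst hkn
    simp only [if_pos (le_refl k), if_neg (by omega : ¬ k + 1 ≤ k)]
    rwa [hun]

lemma chainSums_lower (hε : 0 < ε) {x y : X} {m : ℕ} (h : y ∉ iterBall x ε m)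
    {S : ℝ} (hS : S ∈ chainSums ε x y) : m * ε / 2 ≤ S := by
  by_contra hc
  push_neg at hc
  obtain ⟨n, u, hu0, hun, hsteps, rfl⟩ := hS
  exact h (hu0 ▸ hun ▸ chain_sum_mem_iterBall hε n u m hsteps hc)

end Aux

theorem bourbakiBounded_iff_uniformContinuous_bounded {X : Type*} [MetricSpace X]
    (B : Set X) :
    BourbakiBounded B ↔ ∀ f : X → ℝ, UniformContinuous f → Bornology.IsBounded (f '' B) := by
  constructor
  · -- Bourbaki bounded → uniformly continuous functions are bounded on B
    intro hB f hf
    rw [Metric.uniformContinuous_iff] at hf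
    obtain ⟨δ, hδ, hδ'⟩ := hf 1 one_pos
    obtain ⟨m, s, hs⟩ := hB δ hδ
    have key : ∀ m : ℕ, ∀ x y : X, y ∈ iterBall x δ m → dist (f y) (f x) < m + 1 := by
      intro m
      induction m with
      | zero =>
        intro x y hy
        have : dist y x < δ := by simpa [iterBall, Metric.mem_ball] using hy
        simpa using hδ' this
      | succ m ih =>
        intro x y hy
        obtain ⟨z, hz, hyz⟩ := Set.mem_iUnion₂.mp hy
        have h1 : dist (f y) (f z) < 1 := hδ' (Metric.mem_ball.mp hyz)
        have h2 : dist (f z) (f x) < m + 1 := ih x z hz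
        calc dist (f y) (f x) ≤ dist (f y) (f z) + dist (f z) (f x) := dist_triangle _ _ _
          _ < (m + 1 : ℕ) + 1 := by push_cast; linarith
    have hsub : f '' B ⊆ ⋃ x ∈ s, Metric.ball (f x) (m + 1) := by
      rintro - ⟨b, hb, rfl⟩
      obtain ⟨x, hx, hbx⟩ := Set.mem_iUnion₂.mp (hs hb)
      exact Set.mem_biUnion hx (by simpa [Metric.mem_ball] using key m x b hbx)
    exact ((Bornology.isBounded_biUnion s.finite_toSet).2
      (fun x _ => Metric.isBounded_ball)).subset hsub
  · -- converse
    intro H ε hε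
    by_contra hc
    push_neg at hc
    by_cases hT : ∃ T : Finset X, ∀ b ∈ B, ∃ t ∈ T, Chained ε t b
    · -- finitely many chain components meet B: use the chain-length function
      obtain ⟨T, hTmem⟩ := hT
      set A : X → Set ℝ := fun y => {S | ∃ t ∈ T, S ∈ chainSums ε t y} with hAdef
      have hAbdd : ∀ y, BddBelow (A y) := by
        rintro y
        exact ⟨0, fun S ⟨t, ht, hS⟩ => chainSums_nonneg hS⟩
      set f : X → ℝ := fun y => sInf (A y) with hfdef
      have hchain_ne : ∀ {y}, (∃ t ∈ T, Chained ε t y) → (A y).Nonempty := by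
        rintro y ⟨t, ht, hty⟩
        obtain ⟨S, hS⟩ := chainSums_of_chained hty
        exact ⟨S, t, ht, hS⟩
      have htrans : ∀ y z : X, dist y z < ε → (∃ t ∈ T, Chained ε t y) →
          (∃ t ∈ T, Chained ε t z) := by
        rintro y z hd ⟨t, ht, hty⟩
        exact ⟨t, ht, chained_extend hty hd⟩
      have hle : ∀ y z : X, dist y z < ε → (∃ t ∈ T, Chained ε t y) →
          f z ≤ f y + dist y z := by
        intro y z hd hy
        have h1 : ∀ S ∈ A y, f z ≤ S + dist y z := by
          rintro S ⟨t, ht, hS⟩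
          exact csInf_le (hAbdd z) ⟨t, ht, chainSums_extend hS hd⟩
        have h2 : f z - dist y z ≤ f y :=
          le_csInf (hchain_ne hy) fun S hS => by linarith [h1 S hS]
        linarith
      -- f is uniformly continuous
      have hfUC : UniformContinuous f := by
        rw [Metric.uniformContinuous_iff]
        intro η hη
        refine ⟨min ε η, lt_min hε hη, ?_⟩
        intro a b hab
        have habε : dist a b < ε := lt_of_lt_of_le hab (min_le_left _ _)
        have habη : dist a b < η := lt_of_lt_of_le hab (min_le_right _ _)
        by_cases ha : ∃ t ∈ T, Chained ε t a
        · have hb : ∃ t ∈ T, Chained ε t b := htrans a b habε ha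
          have h1 := hle a b habε ha
          have h2 := hle b a (by rwa [dist_comm]) hb
          rw [Real.dist_eq, abs_sub_lt_iff]
          rw [dist_comm b a] at h2
          constructor <;> linarith [dist_nonneg (x := a) (y := b)]
        · have hb : ¬ ∃ t ∈ T, Chained ε t b := by
            intro hb
            exact ha (htrans b a (by rwa [dist_comm]) hb)
          have hAa : A a = ∅ := by
            ext S; simp only [Set.mem_empty_iff_false, iff_false]
            rintro ⟨t, ht, hS⟩
            exact ha ⟨t, ht, chained_of_chainSums hS⟩
          have hAb : A b = ∅ := by
            ext S; simp only [Set.mem_empty_iff_false, iff_false]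
            rintro ⟨t, ht, hS⟩
            exact hb ⟨t, ht, chained_of_chainSums hS⟩
          have : f a = f b := by simp [hfdef, hAa, hAb]
          simpa [this] using hη
      -- f is bounded on B, contradiction
      obtain ⟨C, hC⟩ := (isBounded_iff_forall_norm_le).mp (H f hfUC)
      obtain ⟨m, hm⟩ := exists_nat_gt (2 * C / ε + 1)
      have hmC : C < m * ε / 2 := by
        rw [div_add' _ _ _ (ne_of_gt hε), div_lt_iff₀ hε] at hm
        nlinarith
      obtain ⟨b, hbB, hb⟩ := Set.not_subset.mp (hc m T)
      have hblow : m * ε / 2 ≤ f b := by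
        apply le_csInf (hchain_ne (hTmem b hbB))
        rintro S ⟨t, ht, hS⟩
        have hbt : b ∉ iterBall t ε m := fun hmem => hb (Set.mem_biUnion ht hmem)
        exact chainSums_lower hε hbt hS
      have := hC (f b) ⟨b, hbB, rfl⟩
      rw [Real.norm_eq_abs] at this
      have := le_abs_self (f b)
      linarith [abs_nonneg (f b)]
    · -- infinitely many chain components meet B: use a locally constant function
      push_neg at hT
      classical
      choose pick hpickB hpick using hT
      let Tseq : ℕ → Finset X := fun n => Nat.rec ∅ (fun k Tk => insert (pick Tk) Tk) n
      set b : ℕ → X := fun n => pick (Tseq n) with hbdef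
      have hTsucc : ∀ n, Tseq (n+1) = insert (b n) (Tseq n) := fun n => rfl
      have hTmono : ∀ {k n : ℕ}, k ≤ n → Tseq k ⊆ Tseq n := by
        intro k n h
        induction n with
        | zero => simp_all
        | succ n ih =>
          rcases Nat.lt_or_ge k (n+1) with h' | h'
          · exact (ih (Nat.lt_succ_iff.mp h')).trans (by rw [hTsucc]; exact Finset.subset_insert _ _)
          · have : k = n + 1 := by omega
            subst this; exact subset_rfl
      have hbmem : ∀ {k n : ℕ}, k < n → b k ∈ Tseq n := by
        intro k n h
        apply hTmono h
        rw [hTsucc]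
        exact Finset.mem_insert_self _ _
      set g : X → ℝ := fun y => ((sInf {n | Chained ε (b n) y} : ℕ) : ℝ) with hgdef
      have hgeq : ∀ y z : X, dist y z < ε → g y = g z := by
        intro y z hd
        have : {n | Chained ε (b n) y} = {n | Chained ε (b n) z} := by
          ext n
          constructor
          · intro h; exact chained_extend h hd
          · intro h; exact chained_extend h (by rwa [dist_comm])
        simp [hgdef, this]
      have hgUC : UniformContinuous g := by
        rw [Metric.uniformContinuous_iff]
        intro η hη
        exact ⟨ε, hε, fun {a bb} hab => by rw [hgeq a bb hab]; simpa using hη⟩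
      obtain ⟨C, hC⟩ := (isBounded_iff_forall_norm_le).mp (H g hgUC)
      obtain ⟨n, hn⟩ := exists_nat_gt C
      have hgbn : g (b n) = n := by
        have hne : n ∈ {k | Chained ε (b k) (b n)} := chained_refl _
        have hle' : sInf {k | Chained ε (b k) (b n)} ≤ n := Nat.sInf_le hne
        have hmem := Nat.sInf_mem (Set.nonempty_of_mem hne)
        set k := sInf {k | Chained ε (b k) (b n)}
        have : ¬ k < n := by
          intro hkn
          exact hpick (Tseq n) (b k) (hbmem hkn) hmem
        have hkn : k = n := by omega
        show ((k : ℕ) : ℝ) = (n : ℝ)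
        rw [hkn]
      have := hC (g (b n)) ⟨b n, hpickB (Tseq n), rfl⟩
      rw [hgbn, Real.norm_eq_abs] at this
      have : (n : ℝ) ≤ C := le_trans (le_abs_self _) this
      linarith
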